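/- Let A_1,…,A_k be pairwise disjoint subsets of the vertex set of G with 1 ≤ k ≤ s and |A_1| = ⋯ = |A_k| = b. Under the uniform probability measure on Φ_c, the probability that, for each j ∈ [k], all vertices of A_j receive one common color and these k colors are pairwise distinct, equals (k! / n^{(k·b)}) · E_k( c_1^{(b)}, …, c_s^{(b)} ), where E_k is the degree-k elementary symmetric polynomial in s variables and x^{(b)} is the falling factorial. -/

import Mathlib

open Finset MeasureTheory Filter
open scoped Classical

/-- The finset of `c`-colorings of the vertex set `Fin n` with `s` colors:
maps `f : Fin n → Fin s` whose color class of color `i` has exactly `c i` elements. -/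
noncomputable def colorings (n s : ℕ) (c : Fin s → ℕ) : Finset (Fin n → Fin s) :=
  Finset.univ.filter fun f => ∀ i, (Finset.univ.filter fun v => f v = i).card = c i

/-- Probability of an event under the uniform measure on the set of `c`-colorings. -/
noncomputable def colProb (n s : ℕ) (c : Fin s → ℕ) (E : (Fin n → Fin s) → Prop) : ℝ :=
  (((colorings n s c).filter fun f => E f).card : ℝ) / ((colorings n s c).card : ℝ)

/-- Expectation of a real statistic under the uniform measure on `c`-colorings. -/
noncomputable def colExp (n s : ℕ) (c : Fin s → ℕ) (Y : (Fin n → Fin s) → ℝ) : ℝ :=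
  (∑ f ∈ colorings n s c, Y f) / ((colorings n s c).card : ℝ)

/-- Variance of a real statistic under the uniform measure on `c`-colorings. -/
noncomputable def colVar (n s : ℕ) (c : Fin s → ℕ) (Y : (Fin n → Fin s) → ℝ) : ℝ :=
  colExp n s c fun f => (Y f - colExp n s c Y) ^ 2

/-- The number of edges of `G`. -/
noncomputable def edgeCount {n : ℕ} (G : SimpleGraph (Fin n)) : ℕ := G.edgeSet.ncard

/-- `M_i(G)(f)`: the number of edges of `G` whose two endpoints both receive color `i`
under the coloring `f`. -/
noncomputable def monoEdges {n s : ℕ} (G : SimpleGraph (Fin n)) (i : Fin s)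
    (f : Fin n → Fin s) : ℕ :=
  {e ∈ G.edgeSet | ∀ v ∈ e, f v = i}.ncard

/-- `M(G)(f) = ∑ i, M_i(G)(f)`: the total number of monochromatic edges. -/
noncomputable def monoTotal {n s : ℕ} (G : SimpleGraph (Fin n)) (f : Fin n → Fin s) : ℕ :=
  ∑ i, monoEdges G i f

/-- `L(G)(f) = m - M(G)(f)`: the number of bichromatic edges. -/
noncomputable def biEdges {n s : ℕ} (G : SimpleGraph (Fin n)) (f : Fin n → Fin s) : ℝ :=
  (edgeCount G : ℝ) - (monoTotal G f : ℝ)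

/-- `Σ₂(G)`: the sum of the squares of the degrees of `G`. -/
noncomputable def sigma2 {n : ℕ} (G : SimpleGraph (Fin n)) : ℕ :=
  ∑ v, ((G.neighborSet v).ncard) ^ 2

/-- `ζ(G) = √(Σ₂(G)) / m`. -/
noncomputable def zeta {n : ℕ} (G : SimpleGraph (Fin n)) : ℝ :=
  Real.sqrt (sigma2 G) / (edgeCount G : ℝ)

/-- The value of the degree-`k` elementary symmetric polynomial at `(x_1,…,x_s)`. -/
def esymmVal (s : ℕ) (x : Fin s → ℕ) (k : ℕ) : ℕ :=
  ∑ A ∈ Finset.univ.powersetCard k, ∏ i ∈ A, x i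


lemma filter_subtype_card' {V : Type} [Fintype V] [DecidableEq V] (S : Finset V)
    (Q : V → Prop) [DecidablePred Q] :
    (Finset.univ.filter fun v : {v : V // v ∉ S} => Q v.1).card
      = (Finset.univ.filter fun v => v ∉ S ∧ Q v).card := by
  apply Finset.card_nbij (i := Subtype.val)
  · intro a ha
    simp only [mem_coe, mem_filter, mem_univ, true_and] at ha ⊢
    exact ⟨a.2, ha⟩
  · intro a _ b _ h
    exact Subtype.ext h
  · intro v hv
    simp only [coe_filter, Set.mem_setOf_eq, mem_univ, true_and] at hv
    exact ⟨⟨v, hv.1⟩, by simp [hv.2], rfl⟩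


lemma count_colorings : ∀ (s : ℕ) (V : Type) [Fintype V] [DecidableEq V] (c : Fin s → ℕ),
    (∑ i, c i = Fintype.card V) →
    (Finset.univ.filter fun f : V → Fin s =>
        ∀ i, (Finset.univ.filter fun v => f v = i).card = c i).card * ∏ i, (c i).factorial
      = (Fintype.card V).factorial := by
  intro s
  induction s with
  | zero =>
    intro V _ _ c hsum
    simp only [Finset.univ_eq_empty, Finset.sum_empty] at hsum
    have hV : IsEmpty V := Fintype.card_eq_zero_iff.mp hsum.symm
    have h1 : (Finset.univ.filter fun f : V → Fin 0 =>
        ∀ i, (Finset.univ.filter fun v => f v = i).card = c i) = Finset.univ := by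
      apply Finset.filter_true_of_mem
      intro f _ i
      exact absurd i.2 (by omega)
    rw [h1]
    simp [Finset.card_univ, ← hsum, Fintype.card_fun]
  | succ s ih =>
    intro V _ _ c hsum
    set L : Fin (s + 1) := Fin.last s with hL
    have hcL : c L ≤ Fintype.card V := by
      rw [← hsum]; exact Finset.single_le_sum (fun i _ => Nat.zero_le _) (mem_univ L)
    have hfib : (Finset.univ.filter fun f : V → Fin (s+1) =>
        ∀ i, (Finset.univ.filter fun v => f v = i).card = c i).card
        = ∑ B ∈ Finset.univ.powersetCard (c L),
            ((Finset.univ.filter fun f : V → Fin (s+1) =>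
              ∀ i, (Finset.univ.filter fun v => f v = i).card = c i).filter
                (fun f => (Finset.univ.filter fun v => f v = L) = B)).card := by
      apply Finset.card_eq_sum_card_fiberwise
      intro f hf
      simp only [mem_coe, mem_filter, mem_univ, true_and] at hf ⊢
      rw [Finset.mem_powersetCard_univ]
      exact hf L
    have hBcount : ∀ B ∈ Finset.univ.powersetCard (c L),
        ((Finset.univ.filter fun f : V → Fin (s+1) =>
            ∀ i, (Finset.univ.filter fun v => f v = i).card = c i).filter
              (fun f => (Finset.univ.filter fun v => f v = L) = B)).card
          * ∏ i : Fin s, (c i.castSucc).factorial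
        = (Fintype.card V - c L).factorial := by
      intro B hB
      rw [Finset.mem_powersetCard_univ] at hB
      have hcard' : Fintype.card {v : V // v ∉ B} = Fintype.card V - c L := by
        rw [← hB, ← Finset.card_compl]
        refine (Fintype.card_congr (Equiv.subtypeEquivRight ?_)).trans (Fintype.card_coe _)
        intro v; simp
      have key : ((Finset.univ.filter fun f : V → Fin (s+1) =>
            ∀ i, (Finset.univ.filter fun v => f v = i).card = c i).filter
              (fun f => (Finset.univ.filter fun v => f v = L) = B)).card
          = (Finset.univ.filter fun h : {v : V // v ∉ B} → Fin s =>
              ∀ i, (Finset.univ.filter fun v => h v = i).card = c i.castSucc).card := by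
        refine Finset.card_bij'
          (fun f hf => fun v : {v : V // v ∉ B} =>
            Fin.castPred (f v.1) (by
              simp only [mem_filter, mem_univ, true_and] at hf
              intro hfl
              refine v.2 ?_
              have h2 : (v : V) ∈ Finset.univ.filter (fun w => f w = L) :=
                Finset.mem_filter.mpr ⟨Finset.mem_univ _, hfl⟩
              rwa [hf.2] at h2))
          (fun h _ => fun v : V => if hv : v ∈ B then L else (h ⟨v, hv⟩).castSucc)
          ?_ ?_ ?_ ?_
        · -- hi
          intro f hf
          have hf' : (∀ i, (Finset.univ.filter fun v => f v = i).card = c i) ∧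
              (Finset.univ.filter fun v => f v = L) = B := by
            simpa only [mem_filter, mem_univ, true_and] using hf
          simp only [mem_filter, mem_univ, true_and]
          intro i
          refine (Finset.card_nbij (i := Subtype.val)
            (t := Finset.univ.filter fun w : V => f w = i.castSucc) ?_ ?_ ?_).trans ?_
          · intro v hv
            simp only [mem_coe, mem_filter, mem_univ, true_and] at hv ⊢
            rw [← hv, Fin.castSucc_castPred]
          · intro a _ b _ h
            exact Subtype.ext h
          · intro w hw
            simp only [coe_filter, Set.mem_setOf_eq, mem_univ, true_and] at hw
            have hwB : w ∉ B := by
              rw [← hf'.2]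
              simp only [mem_filter, mem_univ, true_and]
              rw [hw]
              exact (Fin.castSucc_lt_last i).ne
            refine ⟨⟨w, hwB⟩, ?_, rfl⟩
            simp only [mem_coe, mem_filter, mem_univ, true_and]
            rw [Fin.castPred_eq_iff_eq_castSucc]
            exact hw
          · exact hf'.1 i.castSucc
        · -- hj
          intro h hh
          have hh' : ∀ i, (Finset.univ.filter fun v : {v : V // v ∉ B} => h v = i).card
              = c i.castSucc := by
            simpa only [mem_filter, mem_univ, true_and] using hh
          have hBfib : (Finset.univ.filter fun v : V =>
              (if hv : v ∈ B then L else (h ⟨v, hv⟩).castSucc) = L) = B := by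
            ext v
            simp only [mem_filter, mem_univ, true_and]
            by_cases hv : v ∈ B
            · simp [hv]
            · simp only [hv, dif_neg, not_false_iff, iff_false]
              exact (Fin.castSucc_lt_last _).ne
          rw [Finset.mem_filter, Finset.mem_filter]
          refine ⟨⟨Finset.mem_univ _, ?_⟩, hBfib⟩
          intro i
          rcases eq_or_ne i L with rfl | hiL
          · rw [hBfib, hB]
          · obtain ⟨i', rfl⟩ := Fin.exists_castSucc_eq.mpr hiL
            have e3 : (Finset.univ.filter fun v : V =>
                (if hv : v ∈ B then L else (h ⟨v, hv⟩).castSucc) = i'.castSucc)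
                = (Finset.univ.filter fun v : V => v ∉ B ∧
                    ∀ hv : v ∉ B, h ⟨v, hv⟩ = i') := by
              ext v
              simp only [mem_filter, mem_univ, true_and]
              by_cases hv : v ∈ B
              · rw [dif_pos hv]
                constructor
                · intro he; exact absurd he.symm (Fin.castSucc_lt_last i').ne
                · intro he; exact absurd hv he.1
              · rw [dif_neg hv]
                simp only [Fin.castSucc_inj]
                constructor
                · intro he; exact ⟨hv, fun _ => he⟩
                · intro he; exact he.2 hv
            have e4 : (Finset.univ.filter fun v : {v : V // v ∉ B} =>
                ∀ hv : (v : V) ∉ B, h ⟨(v : V), hv⟩ = i')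
                = (Finset.univ.filter fun v : {v : V // v ∉ B} => h v = i') := by
              ext v
              simp only [mem_filter, mem_univ, true_and]
              constructor
              · intro hx; exact hx v.2
              · intro hx hv; exact hx
            rw [e3, ← filter_subtype_card' B (fun v => ∀ hv : v ∉ B, h ⟨v, hv⟩ = i'), e4]
            exact hh' i'
        · -- left_inv
          intro f hf
          have hf' : (∀ i, (Finset.univ.filter fun v => f v = i).card = c i) ∧
              (Finset.univ.filter fun v => f v = L) = B := by
            simpa only [mem_filter, mem_univ, true_and] using hf
          funext v
          beta_reduce
          by_cases hv : v ∈ B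
          · rw [dif_pos hv]
            have hmem := hv
            rw [← hf'.2] at hmem
            simp only [mem_filter, mem_univ, true_and] at hmem
            exact hmem.symm
          · rw [dif_neg hv]
            exact Fin.castSucc_castPred _ _
        · -- right_inv
          intro h hh
          funext v
          rw [Fin.castPred_eq_iff_eq_castSucc]
          beta_reduce
          rw [dif_neg v.2]
      rw [key]
      have hsum' : ∑ i : Fin s, c i.castSucc = Fintype.card {v : V // v ∉ B} := by
        rw [hcard']
        rw [Fin.sum_univ_castSucc] at hsum
        exact Nat.eq_sub_of_add_eq hsum
      rw [ih {v : V // v ∉ B} (fun i => c i.castSucc) hsum', hcard']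
    rw [Fin.prod_univ_castSucc, hfib, Finset.sum_mul]
    calc ∑ B ∈ Finset.univ.powersetCard (c L), ((Finset.univ.filter fun f : V → Fin (s+1) =>
            ∀ i, (Finset.univ.filter fun v => f v = i).card = c i).filter
              (fun f => (Finset.univ.filter fun v => f v = L) = B)).card
          * ((∏ i : Fin s, (c i.castSucc).factorial) * (c L).factorial)
        = ∑ _B ∈ Finset.univ.powersetCard (c L),
            (Fintype.card V - c L).factorial * (c L).factorial := by
          apply Finset.sum_congr rfl
          intro B hB
          rw [← mul_assoc, hBcount B hB]
      _ = (Fintype.card V).choose (c L) * ((Fintype.card V - c L).factorial * (c L).factorial) := by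
          rw [Finset.sum_const, Finset.card_powersetCard, Finset.card_univ, smul_eq_mul]
      _ = (Fintype.card V).factorial := by
          rw [← Nat.choose_mul_factorial_mul_factorial hcL]
          ring

section AuxCount
variable {n s k b : ℕ} {c : Fin s → ℕ} {A : Fin k → Finset (Fin n)} {g : Fin k → Fin s}

/-- the S-part of a fiber -/
lemma spart (hdisj : ∀ j j' : Fin k, j ≠ j' → Disjoint (A j) (A j'))
    (hcard : ∀ j, (A j).card = b) (hg : Function.Injective g)
    (f : Fin n → Fin s) (hf : ∀ j, ∀ v ∈ A j, f v = g j) (i : Fin s) :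
    (Finset.univ.filter fun v => f v = i ∧ v ∈ Finset.univ.biUnion A).card
      = if i ∈ Finset.univ.image g then b else 0 := by
  by_cases hi : i ∈ Finset.univ.image g
  · rw [if_pos hi]
    obtain ⟨j₀, _, hj₀⟩ := Finset.mem_image.mp hi
    have : (Finset.univ.filter fun v => f v = i ∧ v ∈ Finset.univ.biUnion A) = A j₀ := by
      ext v
      simp only [mem_filter, mem_univ, true_and, Finset.mem_biUnion]
      constructor
      · rintro ⟨hfv, ⟨j, hvj⟩⟩
        have : g j = g j₀ := by rw [← hf j v hvj, hfv]; exact hj₀.symm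
        rwa [hg this] at hvj
      · intro hv
        exact ⟨by rw [hf j₀ v hv, hj₀], ⟨j₀, hv⟩⟩
    rw [this, hcard]
  · rw [if_neg hi]
    rw [Finset.card_eq_zero]
    ext v
    simp only [mem_filter, mem_univ, true_and, Finset.mem_biUnion, Finset.notMem_empty,
      iff_false, not_and]
    rintro hfv ⟨j, hvj⟩
    exact hi (Finset.mem_image.mpr ⟨j, mem_univ _, by rw [← hfv, hf j v hvj]⟩)


lemma count_fixed (hsum : ∑ i, c i = n)
    (hdisj : ∀ j j' : Fin k, j ≠ j' → Disjoint (A j) (A j'))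
    (hcard : ∀ j, (A j).card = b) (hg : Function.Injective g) :
    ((colorings n s c).filter fun f => ∀ j, ∀ v ∈ A j, f v = g j).card
        * (∏ i, (c i).factorial) * (n.descFactorial (k*b))
      = (∏ j, (c (g j)).descFactorial b) * n.factorial := by
  classical
  set S : Finset (Fin n) := Finset.univ.biUnion A with hS
  have hScard : S.card = k * b := by
    rw [hS, Finset.card_biUnion (fun j _ j' _ h => hdisj j j' h)]
    simp [hcard, mul_comm]
  have hkbn : k * b ≤ n := by
    rw [← hScard]
    simpa using Finset.card_le_card (Finset.subset_univ S)
  by_cases hbc : ∀ j, b ≤ c (g j)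
  · -- main case
    set c' : Fin s → ℕ := fun i => c i - (if i ∈ Finset.univ.image g then b else 0) with hc'
    have ht_le : ∀ i, (if i ∈ Finset.univ.image g then b else 0) ≤ c i := by
      intro i
      split
      · next h =>
        obtain ⟨j, _, rfl⟩ := Finset.mem_image.mp h
        exact hbc j
      · exact Nat.zero_le _
    have himgcard : (Finset.univ.image g).card = k := by
      rw [Finset.card_image_of_injective _ hg, Finset.card_univ, Fintype.card_fin]
    have hsum' : ∑ i, c' i = n - k * b := by
      simp only [hc']
      rw [Finset.sum_tsub_distrib Finset.univ (fun i _ => ht_le i), hsum]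
      congr 1
      simp only [Finset.sum_ite_mem, Finset.univ_inter, Finset.sum_const, smul_eq_mul, himgcard]
    have hprodsplit : ∏ i, (c i).factorial
        = (∏ i, (c' i).factorial) * ∏ j, (c (g j)).descFactorial b := by
      have h1 : ∏ j, (c (g j)).descFactorial b
          = ∏ i ∈ Finset.univ.image g, (c i).descFactorial b := by
        rw [Finset.prod_image (fun a _ a' _ h => hg h)]
      have h2 : ∀ i, (c i).factorial = (c' i).factorial
          * (if i ∈ Finset.univ.image g then (c i).descFactorial b else 1) := by
        intro i
        by_cases hi : i ∈ Finset.univ.image g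
        · rw [if_pos hi]
          have hble : b ≤ c i := by have := ht_le i; rwa [if_pos hi] at this
          have hc'i : c' i = c i - b := by
            show c i - (if i ∈ Finset.univ.image g then b else 0) = c i - b
            rw [if_pos hi]
          rw [hc'i, Nat.factorial_mul_descFactorial hble]
        · rw [if_neg hi, mul_one]
          congr 1
          show c i = c i - (if i ∈ Finset.univ.image g then b else 0)
          rw [if_neg hi, Nat.sub_zero]
      rw [h1, Finset.prod_congr rfl (fun i _ => h2 i), Finset.prod_mul_distrib,
        Finset.prod_ite_mem, Finset.univ_inter]
    have hcardV' : Fintype.card {v : Fin n // v ∉ S} = n - k * b := by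
      have h1 : Fintype.card {v : Fin n // v ∉ S} = (Sᶜ).card := by
        refine (Fintype.card_congr (Equiv.subtypeEquivRight ?_)).trans (Fintype.card_coe _)
        intro v; simp
      rw [h1, Finset.card_compl, hScard, Fintype.card_fin]
    have key : ((colorings n s c).filter fun f => ∀ j, ∀ v ∈ A j, f v = g j).card
        = (Finset.univ.filter fun h : {v : Fin n // v ∉ S} → Fin s =>
            ∀ i, (Finset.univ.filter fun v => h v = i).card = c' i).card := by
      refine Finset.card_bij'
        (fun f _ => fun v : {v : Fin n // v ∉ S} => f v.1)
        (fun h _ => fun v : Fin n => if hv : v ∈ S then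
            g (Finset.mem_biUnion.mp (show v ∈ Finset.univ.biUnion A from hv)).choose
          else h ⟨v, hv⟩)
        ?_ ?_ ?_ ?_
      · -- hi
        intro f hf
        have hf1 : ∀ i, (Finset.univ.filter fun v => f v = i).card = c i := by
          have := (Finset.mem_filter.mp hf).1
          simpa [colorings] using this
        have hf2 : ∀ j, ∀ v ∈ A j, f v = g j := (Finset.mem_filter.mp hf).2
        simp only [mem_filter, mem_univ, true_and]
        intro i
        rw [filter_subtype_card' S (fun v => f v = i)]
        have hsp : (Finset.univ.filter fun v => f v = i ∧ v ∈ S).card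
            = (if i ∈ Finset.univ.image g then b else 0) := spart hdisj hcard hg f hf2 i
        have hsplit := Finset.card_filter_add_card_filter_not
          (s := Finset.univ.filter fun v => f v = i) (p := fun v => v ∈ S)
        rw [Finset.filter_filter, Finset.filter_filter] at hsplit
        have hcomm : (Finset.univ.filter fun v => v ∉ S ∧ f v = i)
            = (Finset.univ.filter fun v => f v = i ∧ ¬ v ∈ S) := by
          ext v
          simp only [mem_filter, mem_univ, true_and]
          exact and_comm
        rw [hcomm]
        have hci := hf1 i
        have hti := ht_le i
        show _ = c i - (if i ∈ Finset.univ.image g then b else 0)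
        by_cases hii : i ∈ Finset.univ.image g
        · rw [if_pos hii] at hsp hti ⊢
          omega
        · rw [if_neg hii] at hsp hti ⊢
          omega
      · -- hj
        intro h hh
        have hh' : ∀ i, (Finset.univ.filter fun v : {v : Fin n // v ∉ S} => h v = i).card
            = c' i := by simpa using hh
        have hpres : ∀ j, ∀ v ∈ A j, (fun v : Fin n => if hv : v ∈ S then
            g (Finset.mem_biUnion.mp (show v ∈ Finset.univ.biUnion A from hv)).choose
          else h ⟨v, hv⟩) v = g j := by
          intro j v hv
          have hvS : v ∈ S := by
            rw [hS]
            exact Finset.mem_biUnion.mpr ⟨j, Finset.mem_univ _, hv⟩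
          simp only
          rw [dif_pos hvS]
          have hspec := (Finset.mem_biUnion.mp
            (show v ∈ Finset.univ.biUnion A from hvS)).choose_spec
          congr 1
          by_contra hne
          exact (Finset.disjoint_left.mp (hdisj _ j hne) hspec.2) hv
        rw [Finset.mem_filter]
        refine ⟨?_, hpres⟩
        rw [colorings, Finset.mem_filter]
        refine ⟨Finset.mem_univ _, ?_⟩
        intro i
        beta_reduce
        have hsp : (Finset.univ.filter fun v : Fin n => ((if hv : v ∈ S then
              g (Finset.mem_biUnion.mp (show v ∈ Finset.univ.biUnion A from hv)).choose
            else h ⟨v, hv⟩) = i ∧ v ∈ S)).card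
            = (if i ∈ Finset.univ.image g then b else 0) := spart hdisj hcard hg _ hpres i
        have hsplit := Finset.card_filter_add_card_filter_not
          (s := Finset.univ.filter fun v : Fin n => (if hv : v ∈ S then
              g (Finset.mem_biUnion.mp (show v ∈ Finset.univ.biUnion A from hv)).choose
            else h ⟨v, hv⟩) = i) (p := fun v => v ∈ S)
        rw [Finset.filter_filter, Finset.filter_filter] at hsplit
        have hrest : (Finset.univ.filter fun v : Fin n => ((if hv : v ∈ S then
              g (Finset.mem_biUnion.mp (show v ∈ Finset.univ.biUnion A from hv)).choose
            else h ⟨v, hv⟩) = i ∧ ¬ v ∈ S)).card = c' i := by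
          have hcomm : (Finset.univ.filter fun v : Fin n => ((if hv : v ∈ S then
                g (Finset.mem_biUnion.mp (show v ∈ Finset.univ.biUnion A from hv)).choose
              else h ⟨v, hv⟩) = i ∧ ¬ v ∈ S))
              = (Finset.univ.filter fun v : Fin n => (v ∉ S ∧ (if hv : v ∈ S then
                g (Finset.mem_biUnion.mp (show v ∈ Finset.univ.biUnion A from hv)).choose
              else h ⟨v, hv⟩) = i)) := by
            ext v
            simp only [mem_filter, mem_univ, true_and]
            exact and_comm
          rw [hcomm, ← filter_subtype_card' S]
          rw [← hh' i]
          congr 1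
          ext v
          simp only [mem_filter, mem_univ, true_and]
          rw [dif_neg v.2]
        have hci : c' i = c i - (if i ∈ Finset.univ.image g then b else 0) := rfl
        have hti := ht_le i
        by_cases hii : i ∈ Finset.univ.image g
        · rw [if_pos hii] at hsp hti hci
          omega
        · rw [if_neg hii] at hsp hti hci
          omega
      · -- left_inv
        intro f hf
        have hf2 : ∀ j, ∀ v ∈ A j, f v = g j := (Finset.mem_filter.mp hf).2
        funext v
        beta_reduce
        by_cases hv : v ∈ S
        · rw [dif_pos hv]
          have hspec := (Finset.mem_biUnion.mp
            (show v ∈ Finset.univ.biUnion A from hv)).choose_spec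
          exact (hf2 _ v hspec.2).symm
        · rw [dif_neg hv]
      · -- right_inv
        intro h hh
        funext v
        beta_reduce
        rw [dif_neg v.2]
    have hrest : ((colorings n s c).filter fun f => ∀ j, ∀ v ∈ A j, f v = g j).card
        * ∏ i, (c' i).factorial = (n - k*b).factorial := by
      rw [key]
      have := count_colorings s {v : Fin n // v ∉ S} c' (by rw [hsum', hcardV'])
      rw [this, hcardV']
    calc ((colorings n s c).filter fun f => ∀ j, ∀ v ∈ A j, f v = g j).card
          * (∏ i, (c i).factorial) * (n.descFactorial (k*b))
        = (((colorings n s c).filter fun f => ∀ j, ∀ v ∈ A j, f v = g j).card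
            * ∏ i, (c' i).factorial) * (n.descFactorial (k*b))
            * ∏ j, (c (g j)).descFactorial b := by rw [hprodsplit]; ring
      _ = ((n - k*b).factorial * (n.descFactorial (k*b)))
            * ∏ j, (c (g j)).descFactorial b := by rw [hrest]
      _ = (∏ j, (c (g j)).descFactorial b) * n.factorial := by
          rw [Nat.factorial_mul_descFactorial hkbn]; ring
  · push_neg at hbc
    obtain ⟨j₀, hj₀⟩ := hbc
    have hzero : (∏ j, (c (g j)).descFactorial b) = 0 :=
      Finset.prod_eq_zero (Finset.mem_univ j₀)
        (Nat.descFactorial_eq_zero_iff_lt.mpr hj₀)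
    have hempty : ((colorings n s c).filter fun f => ∀ j, ∀ v ∈ A j, f v = g j) = ∅ := by
      rw [Finset.filter_eq_empty_iff]
      intro f hf hpres
      have hfib : (Finset.univ.filter fun v => f v = g j₀).card = c (g j₀) := by
        have : ∀ i, (Finset.univ.filter fun v => f v = i).card = c i := by
          simpa [colorings] using hf
        exact this (g j₀)
      have hsub : A j₀ ⊆ Finset.univ.filter fun v => f v = g j₀ := fun v hv =>
        Finset.mem_filter.mpr ⟨Finset.mem_univ _, hpres j₀ v hv⟩
      have := Finset.card_le_card hsub
      rw [hcard j₀, hfib] at this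
      omega
    rw [hempty, hzero]
    simp

end AuxCount

lemma card_inj_with_image (s k : ℕ) (T : Finset (Fin s)) (hT : T.card = k) :
    (Finset.univ.filter fun g : Fin k → Fin s =>
        Function.Injective g ∧ Finset.univ.image g = T).card = k.factorial := by
  have hcardT : Fintype.card {x // x ∈ T} = k := by rw [Fintype.card_coe, hT]
  have h1 : Fintype.card (Fin k ≃ {x // x ∈ T}) = k.factorial := by
    rw [Fintype.card_equiv (Fintype.equivFinOfCardEq hcardT).symm, Fintype.card_fin]
  rw [← h1, ← Finset.card_univ]
  symm
  apply Finset.card_nbij (i := fun e : Fin k ≃ {x // x ∈ T} => fun j => (e j : Fin s))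
  · intro e _
    simp only [mem_coe, mem_filter, mem_univ, true_and]
    constructor
    · intro a a' ha
      exact e.injective (Subtype.ext ha)
    · ext i
      simp only [Finset.mem_image, mem_univ, true_and]
      constructor
      · rintro ⟨j, _, rfl⟩
        exact (e j).2
      · intro hi
        exact ⟨e.symm ⟨i, hi⟩, by simp⟩
  · intro e _ e' _ hee
    simp only at hee
    ext j
    · exact congrFun hee j ▸ rfl
  · intro gfun hgfun
    simp only [coe_filter, Set.mem_setOf_eq, mem_univ, true_and] at hgfun
    obtain ⟨hinj, himg⟩ := hgfun
    have hmem : ∀ j, gfun j ∈ T := by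
      intro j
      rw [← himg]
      exact Finset.mem_image.mpr ⟨j, mem_univ _, rfl⟩
    have hbij : Function.Bijective (fun j => (⟨gfun j, hmem j⟩ : {x // x ∈ T})) := by
      rw [Fintype.bijective_iff_injective_and_card]
      constructor
      · intro a a' ha
        exact hinj (congrArg Subtype.val ha)
      · rw [hcardT, Fintype.card_fin]
    refine ⟨Equiv.ofBijective _ hbij, by simp, ?_⟩
    funext j
    rfl


lemma sum_over_injective (s k : ℕ) (x : Fin s → ℕ) :
    ∑ g ∈ Finset.univ.filter (fun g : Fin k → Fin s => Function.Injective g), ∏ j, x (g j)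
      = k.factorial * esymmVal s x k := by
  rw [esymmVal, Finset.mul_sum]
  rw [← Finset.sum_fiberwise_of_maps_to (g := fun g : Fin k → Fin s => Finset.univ.image g)
    (t := Finset.univ.powersetCard k) ?_ (fun g => ∏ j, x (g j))]
  · apply Finset.sum_congr rfl
    intro T hT
    rw [Finset.mem_powersetCard_univ] at hT
    have hterm : ∀ g ∈ (Finset.univ.filter
        (fun g : Fin k → Fin s => Function.Injective g)).filter
          (fun g => Finset.univ.image g = T), ∏ j, x (g j) = ∏ i ∈ T, x i := by
      intro g hg
      simp only [mem_filter, mem_univ, true_and] at hg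
      rw [← hg.2, Finset.prod_image (fun a _ a' _ h => hg.1 h)]
    rw [Finset.sum_congr rfl hterm, Finset.sum_const, smul_eq_mul]
    congr 1
    rw [Finset.filter_filter]
    exact card_inj_with_image s k T hT
  · intro g hg
    simp only [mem_filter, mem_univ, true_and] at hg
    rw [Finset.mem_powersetCard_univ, Finset.card_image_of_injective _ hg,
      Finset.card_univ, Fintype.card_fin]


set_option maxHeartbeats 1000000 in
/-- For pairwise disjoint sets `A_1,…,A_k` all of cardinality `b ≥ 1`,
the probability that each `A j` is monochromatic with pairwise distinct colors equals
`(k!/n^{(kb)}) E_k(c_1^{(b)},…,c_s^{(b)})`. -/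
theorem stmt5 (n s k b : ℕ) (hs2 : 2 ≤ s) (hsn : s ≤ n)
    (c : Fin s → ℕ) (hpos : ∀ i, 0 < c i) (hsum : ∑ i, c i = n)
    (G : SimpleGraph (Fin n))
    (hk1 : 1 ≤ k) (hks : k ≤ s) (hb : 1 ≤ b)
    (A : Fin k → Finset (Fin n))
    (hdisj : ∀ j j' : Fin k, j ≠ j' → Disjoint (A j) (A j'))
    (hcard : ∀ j, (A j).card = b) :
    colProb n s c
        (fun f => ∃ g : Fin k → Fin s, Function.Injective g ∧ ∀ j, ∀ v ∈ A j, f v = g j)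
      = ((k.factorial : ℝ) / (n.descFactorial (k * b) : ℝ)) *
          (esymmVal s (fun i => (c i).descFactorial b) k : ℝ) := by
  classical
  -- notation
  set N := (colorings n s c).card with hNdef
  have hNfact : N * ∏ i, (c i).factorial = n.factorial := by
    have := count_colorings s (Fin n) c (by rw [hsum, Fintype.card_fin])
    rw [Fintype.card_fin] at this
    exact this
  have hS : (Finset.univ.biUnion A).card = k * b := by
    rw [Finset.card_biUnion (fun j _ j' _ h => hdisj j j' h)]
    simp [hcard, mul_comm]
  have hkbn : k * b ≤ n := by
    rw [← hS]
    simpa using Finset.card_le_card (Finset.subset_univ (Finset.univ.biUnion A))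
  have hm : n.descFactorial (k * b) ≠ 0 := by
    rw [Ne, Nat.descFactorial_eq_zero_iff_lt]
    omega
  have hDpos : 0 < ∏ i, (c i).factorial :=
    Finset.prod_pos fun i _ => Nat.factorial_pos _
  have hNpos : 0 < N := by
    by_contra hN0
    push_neg at hN0
    interval_cases N
    simp at hNfact
    exact absurd hNfact.symm (Nat.factorial_ne_zero n)
  -- decomposition of the event over the (unique) injective witness
  have hdecomp : ((colorings n s c).filter fun f => ∃ g : Fin k → Fin s,
      Function.Injective g ∧ ∀ j, ∀ v ∈ A j, f v = g j)
      = (Finset.univ.filter fun g : Fin k → Fin s => Function.Injective g).biUnion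
          (fun g => (colorings n s c).filter fun f => ∀ j, ∀ v ∈ A j, f v = g j) := by
    ext f
    simp only [Finset.mem_filter, Finset.mem_biUnion, Finset.mem_univ, true_and]
    constructor
    · rintro ⟨hf, g, hg1, hg2⟩; exact ⟨g, hg1, hf, hg2⟩
    · rintro ⟨g, hg1, hf, hg2⟩; exact ⟨hf, g, hg1, hg2⟩
  have hcardsum : ((colorings n s c).filter fun f => ∃ g : Fin k → Fin s,
      Function.Injective g ∧ ∀ j, ∀ v ∈ A j, f v = g j).card
      = ∑ g ∈ Finset.univ.filter (fun g : Fin k → Fin s => Function.Injective g),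
          ((colorings n s c).filter fun f => ∀ j, ∀ v ∈ A j, f v = g j).card := by
    rw [hdecomp]
    apply Finset.card_biUnion
    intro g hg g' hg' hne
    rw [Function.onFun, Finset.disjoint_left]
    intro f hfg hfg'
    apply hne
    funext j
    obtain ⟨v, hv⟩ := Finset.card_pos.mp
      (show 0 < (A j).card by rw [hcard j]; omega)
    have h1 := (Finset.mem_filter.mp hfg).2 j v hv
    have h2 := (Finset.mem_filter.mp hfg').2 j v hv
    rw [← h1, h2]
  -- the key natural-number identity
  have hkey : (((colorings n s c).filter fun f => ∃ g : Fin k → Fin s,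
      Function.Injective g ∧ ∀ j, ∀ v ∈ A j, f v = g j).card)
      * n.descFactorial (k * b)
      = (k.factorial * esymmVal s (fun i => (c i).descFactorial b) k) * N := by
    have hsummed : (∑ g ∈ Finset.univ.filter
          (fun g : Fin k → Fin s => Function.Injective g),
          ((colorings n s c).filter fun f => ∀ j, ∀ v ∈ A j, f v = g j).card)
        * (∏ i, (c i).factorial) * (n.descFactorial (k * b))
        = (∑ g ∈ Finset.univ.filter
            (fun g : Fin k → Fin s => Function.Injective g),
            ∏ j, (c (g j)).descFactorial b) * n.factorial := by
      rw [Finset.sum_mul, Finset.sum_mul, Finset.sum_mul]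
      apply Finset.sum_congr rfl
      intro g hg
      simp only [Finset.mem_filter, Finset.mem_univ, true_and] at hg
      exact count_fixed hsum hdisj hcard hg
    rw [sum_over_injective s k (fun i => (c i).descFactorial b)] at hsummed
    rw [← hNfact] at hsummed
    rw [hcardsum]
    have h2 : ((∑ g ∈ Finset.univ.filter
          (fun g : Fin k → Fin s => Function.Injective g),
          ((colorings n s c).filter fun f => ∀ j, ∀ v ∈ A j, f v = g j).card)
        * (n.descFactorial (k * b))) * (∏ i, (c i).factorial)
        = ((k.factorial * esymmVal s (fun i => (c i).descFactorial b) k) * N)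
            * (∏ i, (c i).factorial) := by
      calc _ = (∑ g ∈ Finset.univ.filter
            (fun g : Fin k → Fin s => Function.Injective g),
            ((colorings n s c).filter fun f => ∀ j, ∀ v ∈ A j, f v = g j).card)
          * (∏ i, (c i).factorial) * (n.descFactorial (k * b)) := by ring
        _ = _ := by rw [hsummed]; ring
    exact Nat.eq_of_mul_eq_mul_right hDpos h2
  -- conclude over the reals
  have hmR : (n.descFactorial (k * b) : ℝ) ≠ 0 := Nat.cast_ne_zero.mpr hm
  have hNR : (N : ℝ) ≠ 0 := Nat.cast_ne_zero.mpr hNpos.ne'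
  simp only [colProb]
  rw [div_mul_eq_mul_div, div_eq_div_iff hNR hmR]
  have hsame : ∀ (h₁ h₂ : DecidablePred fun f : Fin n → Fin s =>
      ∃ g : Fin k → Fin s, Function.Injective g ∧ ∀ j, ∀ v ∈ A j, f v = g j),
      (@Finset.filter _ _ h₁ (colorings n s c)).card
        = (@Finset.filter _ _ h₂ (colorings n s c)).card := by
    intro h₁ h₂
    congr!
  rw [hsame _ (fun a => Fintype.decidableExistsFintype)]
  exact_mod_cast hkey
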